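/- Let P̃ ⊆ conv(B) be a convex polytope, where B = {1,...,n₁} × ... × {1,...,n_k} ⊆ ℤ^k and conv(B) is its real convex hull, and let P = P̃ ∩ ℤ^k. Then | vol(P̃) − |P| | ≤ 2k(k+1)·(min_i n_i)^{-1}·|B|, where vol denotes Lebesgue measure, |P| the number of lattice points, and |B| = n₁⋯n_k. -/

import Mathlib

open Finset MeasureTheory

namespace PolytopeAux

variable {k : ℕ}

def cube (x : Fin k → ℤ) : Set (Fin k → ℝ) :=
  Set.pi Set.univ fun j => Set.Ico (x j : ℝ) ((x j : ℝ) + 1)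

lemma mem_cube {x : Fin k → ℤ} {y : Fin k → ℝ} :
    y ∈ cube x ↔ ∀ j, (x j : ℝ) ≤ y j ∧ y j < (x j : ℝ) + 1 := by
  simp [cube, Set.mem_pi]

lemma cube_meas (x : Fin k → ℤ) : MeasurableSet (cube x) :=
  MeasurableSet.univ_pi fun j => measurableSet_Ico

lemma cube_volume (x : Fin k → ℤ) : volume (cube x) = 1 := by
  rw [cube, volume_pi_pi]
  simp [Real.volume_Ico]

lemma self_mem_cube (x : Fin k → ℤ) : (fun j => (x j : ℝ)) ∈ cube x := by
  rw [mem_cube]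
  exact fun j => ⟨le_rfl, by linarith⟩

lemma mem_cube_iff_floor {x : Fin k → ℤ} {y : Fin k → ℝ} :
    y ∈ cube x ↔ ∀ j, ⌊y j⌋ = x j := by
  rw [mem_cube]
  exact forall_congr' fun j => (Int.floor_eq_iff).symm

lemma cube_cover : ⋃ x : Fin k → ℤ, cube x = Set.univ := by
  ext y
  simp only [Set.mem_iUnion, Set.mem_univ, iff_true]
  exact ⟨fun j => ⌊y j⌋, mem_cube_iff_floor.2 fun j => rfl⟩

lemma cube_disjoint : Pairwise (Function.onFun Disjoint (cube (k := k))) := by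
  intro x x' hne
  rw [Function.onFun, Set.disjoint_left]
  intro y hy hy'
  exact hne (funext fun j =>
    ((mem_cube_iff_floor.1 hy j).symm.trans (mem_cube_iff_floor.1 hy' j)))

lemma clm_apply_eq_sum (f : (Fin k → ℝ) →L[ℝ] ℝ) (y : Fin k → ℝ) :
    f y = ∑ j, y j * f (Pi.single j 1) := by
  conv_lhs => rw [pi_eq_sum_univ y, map_sum]
  refine Finset.sum_congr rfl fun j _ => ?_
  rw [_root_.map_smul, smul_eq_mul]
  congr 2
  funext j'
  simp [Pi.single_apply, eq_comm]

end PolytopeAux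

open PolytopeAux

set_option maxHeartbeats 2000000 in
theorem polytope_volume_vs_lattice_points (k : ℕ) (hk : 0 < k) (n : Fin k → ℕ)
    (V : Finset (Fin k → ℝ))
    (hP : convexHull ℝ (V : Set (Fin k → ℝ)) ⊆
      convexHull ℝ ((fun (x : Fin k → ℤ) (i : Fin k) => (x i : ℝ)) ''
        {x : Fin k → ℤ | ∀ i, 1 ≤ x i ∧ x i ≤ (n i : ℤ)})) :
    |(volume (convexHull ℝ (V : Set (Fin k → ℝ)))).toReal -
        (Set.ncard {x : Fin k → ℤ | (fun i => (x i : ℝ)) ∈ convexHull ℝ (V : Set (Fin k → ℝ))} : ℝ)|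
      ≤ 2 * k * (k + 1) / ((⨅ i, n i : ℕ) : ℝ) * ∏ i, (n i : ℝ) := by
  classical
  haveI : Nonempty (Fin k) := Fin.pos_iff_nonempty.1 hk
  set K : Set (Fin k → ℝ) := convexHull ℝ (V : Set (Fin k → ℝ)) with hKdef
  have hbox : K ⊆ {y : Fin k → ℝ | ∀ i, 1 ≤ y i ∧ y i ≤ (n i : ℝ)} := by
    refine hP.trans (convexHull_min ?_ ?_)
    · rintro y ⟨x, hx, rfl⟩ i
      show (1:ℝ) ≤ (x i : ℝ) ∧ (x i : ℝ) ≤ (n i : ℝ)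
      exact ⟨by exact_mod_cast (hx i).1, by exact_mod_cast (hx i).2⟩
    · have hset : {y : Fin k → ℝ | ∀ i, 1 ≤ y i ∧ y i ≤ (n i : ℝ)}
          = Set.pi Set.univ fun i => Set.Icc (1 : ℝ) (n i) := by
        ext y; simp only [Set.mem_setOf_eq, Set.mem_univ_pi, Set.mem_Icc]
      rw [hset]
      exact convex_pi fun i _ => convex_Icc _ _
  have hRHS0 : (0:ℝ) ≤ 2 * k * (k + 1) / ((⨅ i, n i : ℕ) : ℝ) * ∏ i, (n i : ℝ) := by
    positivity
  rcases Set.eq_empty_or_nonempty K with hKE | hKne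
  · rw [hKE]
    simp [hRHS0]
  -- nonempty case
  have hn1 : ∀ i, 1 ≤ n i := by
    intro i
    obtain ⟨y0, hy0⟩ := hKne
    have h := hbox hy0 i
    exact_mod_cast (h.1.trans h.2)
  have hm1 : 1 ≤ ⨅ i, n i := le_ciInf fun i => hn1 i
  have hmle : ∀ i, (⨅ j, n j) ≤ n i := fun i => ciInf_le (OrderBot.bddBelow _) i
  have hKcvx : Convex ℝ K := convex_convexHull ℝ _
  have hKcl : IsClosed K := V.finite_toSet.isClosed_convexHull ℝ
  have hKm : MeasurableSet K := hKcl.measurableSet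
  set S : Finset (Fin k → ℤ) := Fintype.piFinset fun i => Finset.Icc (1:ℤ) (n i) with hSdef
  have hS : ∀ x : Fin k → ℤ, (K ∩ cube x).Nonempty → x ∈ S := by
    rintro x ⟨y, hyK, hyc⟩
    rw [hSdef, Fintype.mem_piFinset]
    intro j
    rw [Finset.mem_Icc]
    have h1 := hbox hyK j
    have h2 := mem_cube.1 hyc j
    constructor
    · have hx0 : (0:ℝ) < (x j : ℝ) := by linarith [h1.1, h2.2]
      have : (0:ℤ) < x j := by exact_mod_cast hx0
      omega
    · have : (x j : ℝ) ≤ (n j : ℝ) := le_trans h2.1 h1.2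
      exact_mod_cast this
  have hfin : ∀ x : Fin k → ℤ, volume (K ∩ cube x) ≤ 1 := fun x =>
    le_trans (measure_mono Set.inter_subset_right) (le_of_eq (cube_volume x))
  have hvolS : volume K = ∑ x ∈ S, volume (K ∩ cube x) := by
    have hvol : volume K = ∑' x : Fin k → ℤ, volume (K ∩ cube x) := by
      conv_lhs => rw [show K = ⋃ x : Fin k → ℤ, K ∩ cube x by
        rw [← Set.inter_iUnion, cube_cover, Set.inter_univ]]
      exact measure_iUnion
        (fun x x' hne => Disjoint.mono Set.inter_subset_right Set.inter_subset_right
          (cube_disjoint hne))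
        (fun x => hKm.inter (cube_meas x))
    refine hvol.trans (tsum_eq_sum ?_)
    intro x hx
    have hE : K ∩ cube x = ∅ := Set.not_nonempty_iff_eq_empty.1 fun hne => hx (hS x hne)
    simp [hE]
  have hvolR : (volume K).toReal = ∑ x ∈ S, (volume (K ∩ cube x)).toReal := by
    rw [hvolS, ENNReal.toReal_sum]
    exact fun x _ => ne_top_of_le_ne_top ENNReal.one_ne_top (hfin x)
  have hcount : ((Set.ncard {x : Fin k → ℤ | (fun i => (x i : ℝ)) ∈ K}) : ℝ)
      = ∑ x ∈ S, (if (fun i => ((x i : ℝ))) ∈ K then (1:ℝ) else 0) := by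
    have h1 : {x : Fin k → ℤ | (fun i => (x i : ℝ)) ∈ K}
        = ↑(S.filter fun x => (fun i => ((x i : ℝ))) ∈ K) := by
      ext x
      simp only [Set.mem_setOf_eq, Finset.coe_filter, Finset.mem_coe]
      exact ⟨fun h => ⟨hS x ⟨_, h, self_mem_cube x⟩, h⟩, fun h => h.2⟩
    rw [h1, Set.ncard_coe_finset, Finset.sum_boole]
  set Bad : Finset (Fin k → ℤ) :=
    S.filter (fun x => (K ∩ cube x).Nonempty ∧ ¬ cube x ⊆ K) with hBadDef
  have habs : |(volume K).toReal -
      ((Set.ncard {x : Fin k → ℤ | (fun i => (x i : ℝ)) ∈ K}) : ℝ)| ≤ (Bad.card : ℝ) := by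
    rw [hvolR, hcount, ← Finset.sum_sub_distrib]
    refine le_trans (Finset.abs_sum_le_sum_abs _ _) ?_
    have hbc : (Bad.card : ℝ)
        = ∑ x ∈ S, (if ((K ∩ cube x).Nonempty ∧ ¬ cube x ⊆ K) then (1:ℝ) else 0) := by
      rw [Finset.sum_boole, hBadDef]
    rw [hbc]
    refine Finset.sum_le_sum fun x hx => ?_
    by_cases hb : (K ∩ cube x).Nonempty ∧ ¬ cube x ⊆ K
    · rw [if_pos hb]
      have h0 : 0 ≤ (volume (K ∩ cube x)).toReal := ENNReal.toReal_nonneg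
      have h1 : (volume (K ∩ cube x)).toReal ≤ 1 := by
        have := ENNReal.toReal_mono ENNReal.one_ne_top (hfin x)
        simpa using this
      by_cases hxK : (fun i => ((x i : ℝ))) ∈ K
      · rw [if_pos hxK]
        rw [abs_le]; constructor <;> linarith
      · rw [if_neg hxK]
        rw [abs_le]; constructor <;> linarith
    · rw [if_neg hb]
      by_cases hA : (K ∩ cube x).Nonempty
      · have hsub : cube x ⊆ K := by tauto
        have hEq : K ∩ cube x = cube x := Set.inter_eq_self_of_subset_right hsub
        have hxK : (fun i => ((x i : ℝ))) ∈ K := hsub (self_mem_cube x)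
        rw [hEq, cube_volume, if_pos hxK]
        simp
      · have hE : K ∩ cube x = ∅ := Set.not_nonempty_iff_eq_empty.1 hA
        have hxK : (fun i => ((x i : ℝ))) ∉ K := fun h => hA ⟨_, ⟨h, self_mem_cube x⟩⟩
        rw [hE, if_neg hxK]
        simp
  -- separation data
  have hsep : ∀ x : Fin k → ℤ, ∃ (i : Fin k) (s : Bool), x ∈ Bad →
      ∀ x' ∈ Bad, (∀ j, j ≠ i → x' j = x j) →
        (s = true → x' i ≤ x i + (k:ℤ)) ∧ (s = false → x i ≤ x' i + (k:ℤ)) := by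
    intro x
    by_cases hxB : x ∈ Bad
    swap
    · exact ⟨⟨0, hk⟩, true, fun h => absurd h hxB⟩
    obtain ⟨hxS, hxne, hxnsub⟩ := Finset.mem_filter.1 hxB
    obtain ⟨p, hpQ, hpK⟩ := Set.not_subset.1 hxnsub
    obtain ⟨f, u, hfK, hfp⟩ := geometric_hahn_banach_closed_point hKcvx hKcl hpK
    obtain ⟨a, ha⟩ : ∃ a : Fin k → ℝ, ∀ j, a j = f (Pi.single j 1) :=
      ⟨fun j => f (Pi.single j 1), fun j => rfl⟩
    have ha2 : ∀ y : Fin k → ℝ, f y = ∑ j, y j * a j := by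
      intro y
      rw [clm_apply_eq_sum]
      exact Finset.sum_congr rfl fun j _ => by rw [ha]
    obtain ⟨i, -, hi⟩ := Finset.exists_max_image Finset.univ (fun j => |a j|)
      ⟨⟨0, hk⟩, Finset.mem_univ _⟩
    have hane : a i ≠ 0 := by
      intro h0
      have hz : ∀ y, f y = 0 := by
        intro y
        rw [ha2]
        refine Finset.sum_eq_zero fun j _ => ?_
        have hj0 : |a j| ≤ 0 := by
          have := hi j (Finset.mem_univ j)
          rwa [h0, abs_zero] at this
        have : a j = 0 := abs_eq_zero.1 (le_antisymm hj0 (abs_nonneg _))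
        rw [this, mul_zero]
      obtain ⟨q, hqK, -⟩ := hxne
      have h1 := hfK q hqK
      rw [hz q] at h1
      rw [hz p] at hfp
      linarith
    refine ⟨i, decide (0 < a i), fun _ x' hx'B hcol => ?_⟩
    obtain ⟨-, hx'ne, -⟩ := Finset.mem_filter.1 hx'B
    obtain ⟨q, hqK, hqQ⟩ := hx'ne
    have habsb : ∀ j, j ≠ i → |p j - q j| ≤ 1 := by
      intro j hj
      have h4 := mem_cube.1 hpQ j
      have h5 := mem_cube.1 hqQ j
      have h6 : (x' j : ℝ) = (x j : ℝ) := by exact_mod_cast hcol j hj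
      rw [abs_le]
      constructor <;> [linarith [h4.1, h4.2, h5.1, h5.2, h6]; linarith [h4.1, h4.2, h5.1, h5.2, h6]]
    have hb : ∑ j ∈ Finset.univ.erase i, (p j - q j) * a j ≤ (k:ℝ) * |a i| := by
      calc ∑ j ∈ Finset.univ.erase i, (p j - q j) * a j
          ≤ ∑ j ∈ Finset.univ.erase i, |(p j - q j) * a j| :=
            Finset.sum_le_sum fun j _ => le_abs_self _
        _ = ∑ j ∈ Finset.univ.erase i, |p j - q j| * |a j| :=
            Finset.sum_congr rfl fun j _ => abs_mul _ _
        _ ≤ ∑ j ∈ Finset.univ.erase i, 1 * |a i| := by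
            refine Finset.sum_le_sum fun j hj => ?_
            exact mul_le_mul (habsb j (Finset.ne_of_mem_erase hj)) (hi j (Finset.mem_univ j))
              (abs_nonneg _) zero_le_one
        _ = ((Finset.univ.erase i).card : ℝ) * |a i| := by
            rw [Finset.sum_const, nsmul_eq_mul, one_mul]
        _ ≤ (k:ℝ) * |a i| := by
            refine mul_le_mul_of_nonneg_right ?_ (abs_nonneg _)
            have h7 : (Finset.univ.erase i).card ≤ k := by
              have := Finset.card_erase_le (s := (Finset.univ : Finset (Fin k))) (a := i)
              rwa [Finset.card_univ, Fintype.card_fin] at this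
            exact_mod_cast h7
    have hkey : (q i - p i) * a i < (k:ℝ) * |a i| := by
      have hsum : (p i - q i) * a i + ∑ j ∈ Finset.univ.erase i, (p j - q j) * a j
          = f p - f q := by
        rw [ha2 p, ha2 q, ← Finset.sum_sub_distrib,
          ← Finset.add_sum_erase _ _ (Finset.mem_univ i)]
        congr 1
        · ring
        · exact Finset.sum_congr rfl fun j _ => by ring
      have hpos : 0 < (p i - q i) * a i + ∑ j ∈ Finset.univ.erase i, (p j - q j) * a j := by
        rw [hsum]
        have := hfK q hqK
        linarith
      have hneg : (q i - p i) * a i = -((p i - q i) * a i) := by ring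
      rw [hneg]
      linarith
    constructor
    · intro hs
      have hai : 0 < a i := of_decide_eq_true hs
      rw [abs_of_pos hai] at hkey
      have h7 : q i - p i < (k:ℝ) := lt_of_mul_lt_mul_right hkey hai.le
      have h8 := (mem_cube.1 hqQ i).1
      have h9 := (mem_cube.1 hpQ i).2
      have h10 : (x' i : ℝ) < (x i : ℝ) + (k:ℝ) + 1 := by linarith
      have h11 : x' i < x i + (k:ℤ) + 1 := by exact_mod_cast h10
      omega
    · intro hs
      have hai : a i < 0 := lt_of_le_of_ne (not_lt.1 (of_decide_eq_false hs)) hane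
      rw [abs_of_neg hai] at hkey
      have h7 : (q i - p i + (k:ℝ)) * a i < 0 := by
        have hx2 : (q i - p i + (k:ℝ)) * a i = (q i - p i) * a i + (k:ℝ) * a i := by ring
        rw [hx2]
        linarith
      have h8 : 0 < q i - p i + (k:ℝ) := by
        by_contra hcon
        push_neg at hcon
        nlinarith
      have h9 := (mem_cube.1 hqQ i).2
      have h10 := (mem_cube.1 hpQ i).1
      have h11 : (x i : ℝ) < (x' i : ℝ) + (k:ℝ) + 1 := by linarith
      have h12 : x i < x' i + (k:ℤ) + 1 := by exact_mod_cast h11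
      omega
  choose I Sg hIS using hsep
  -- counting
  have hfiber : ∀ (i : Fin k) (s : Bool),
      (Bad.filter fun x => (I x, Sg x) = (i, s)).card
        ≤ (k+1) * ∏ j ∈ Finset.univ.erase i, n j := by
    intro i s
    set F := Bad.filter fun x => (I x, Sg x) = (i, s) with hF
    have him : ∀ x ∈ F, (fun j => if j = i then (0:ℤ) else x j) ∈
        Fintype.piFinset (fun j => if j = i then ({0} : Finset ℤ) else Finset.Icc 1 (n j)) := by
      intro x hxF
      rw [Fintype.mem_piFinset]
      intro j
      by_cases hj : j = i
      · simp [hj]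
      · simp only [if_neg hj]
        have hxS : x ∈ S := (Finset.mem_filter.1 (Finset.mem_filter.1 hxF).1).1
        exact (Fintype.mem_piFinset.1 hxS) j
    have hcb : ∀ b ∈ Fintype.piFinset
        (fun j => if j = i then ({0} : Finset ℤ) else Finset.Icc 1 (n j)),
        (F.filter fun x => (fun j => if j = i then (0:ℤ) else x j) = b).card ≤ k + 1 := by
      intro b _
      set G := F.filter fun x => (fun j => if j = i then (0:ℤ) else x j) = b with hGd
      rcases G.eq_empty_or_nonempty with hE | hne
      · rw [hE]; simp
      · have hGprop : ∀ x ∈ G, x ∈ Bad ∧ I x = i ∧ Sg x = s ∧ ∀ j, j ≠ i → x j = b j := by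
          intro x hxG
          obtain ⟨hxF, hxb⟩ := Finset.mem_filter.1 hxG
          obtain ⟨hxB, hxis⟩ := Finset.mem_filter.1 hxF
          rw [Prod.mk.injEq] at hxis
          refine ⟨hxB, hxis.1, hxis.2, fun j hj => ?_⟩
          have := congrFun hxb j
          simpa [if_neg hj] using this
        have hcol2 : ∀ x ∈ G, ∀ x' ∈ G, ∀ j, j ≠ i → x' j = x j := by
          intro x hx x' hx' j hj
          rw [(hGprop x' hx').2.2.2 j hj, (hGprop x hx).2.2.2 j hj]
        have hne' : (G.image fun x => x i).Nonempty := hne.image _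
        set t₀ := (G.image fun x => x i).min' hne' with ht₀
        obtain ⟨x₀, hx₀G, hx₀i⟩ := Finset.mem_image.1 ((G.image fun x => x i).min'_mem hne')
        have hup : ∀ x ∈ G, x i ≤ t₀ + (k:ℤ) := by
          intro x hxG
          obtain ⟨hxB, hxI, hxS2, -⟩ := hGprop x hxG
          obtain ⟨hx₀B, hx₀I, hx₀S2, -⟩ := hGprop x₀ hx₀G
          cases hs : s with
          | true =>
            have hcolx : ∀ j, j ≠ I x₀ → x j = x₀ j := by
              intro j hj
              rw [hx₀I] at hj
              exact hcol2 x₀ hx₀G x hxG j hj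
            have := (hIS x₀ hx₀B x hxB hcolx).1 (hx₀S2.trans hs)
            rw [hx₀I, hx₀i] at this
            exact this
          | false =>
            have hcolx : ∀ j, j ≠ I x → x₀ j = x j := by
              intro j hj
              rw [hxI] at hj
              exact hcol2 x hxG x₀ hx₀G j hj
            have := (hIS x hxB x₀ hx₀B hcolx).2 (hxS2.trans hs)
            rw [hxI, hx₀i] at this
            exact this
        have hlow : ∀ x ∈ G, t₀ ≤ x i := fun x hx =>
          Finset.min'_le _ _ (Finset.mem_image_of_mem _ hx)
        have hinj : Set.InjOn (fun x : Fin k → ℤ => x i) (↑G : Set (Fin k → ℤ)) := by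
          intro x hx y hy hxy
          funext j
          by_cases hj : j = i
          · rw [hj]; exact hxy
          · rw [hcol2 y (Finset.mem_coe.1 hy) x (Finset.mem_coe.1 hx) j hj]
        calc G.card = (G.image fun x => x i).card := (Finset.card_image_of_injOn hinj).symm
          _ ≤ (Finset.Icc t₀ (t₀ + (k:ℤ))).card := by
              refine Finset.card_le_card ?_
              intro t ht
              obtain ⟨x, hxG, rfl⟩ := Finset.mem_image.1 ht
              exact Finset.mem_Icc.2 ⟨hlow x hxG, hup x hxG⟩
          _ = k + 1 := by
              rw [Int.card_Icc]
              have : t₀ + (k:ℤ) + 1 - t₀ = ((k+1 : ℕ) : ℤ) := by push_cast; ring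
              rw [this, Int.toNat_natCast]
    calc F.card ≤ (k+1) * (Fintype.piFinset
          (fun j => if j = i then ({0} : Finset ℤ) else Finset.Icc 1 (n j))).card :=
        Finset.card_le_mul_card_image_of_maps_to him (k+1) hcb
      _ = (k+1) * ∏ j ∈ Finset.univ.erase i, n j := by
          rw [Fintype.card_piFinset]
          congr 1
          have h1 : ∀ j : Fin k, ((if j = i then ({0} : Finset ℤ) else Finset.Icc 1 (n j)).card)
              = if j = i then 1 else n j := by
            intro j
            by_cases hj : j = i
            · simp [hj]
            · rw [if_neg hj, if_neg hj, Int.card_Icc]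
              simp
          rw [Finset.prod_congr rfl fun j _ => h1 j]
          rw [← Finset.prod_erase_mul Finset.univ _ (Finset.mem_univ i), if_pos rfl, mul_one]
          exact Finset.prod_congr rfl fun j hj => if_neg (Finset.ne_of_mem_erase hj)
  have hcard : Bad.card ≤ 2 * (k+1) * ∑ i, ∏ j ∈ Finset.univ.erase i, n j := by
    calc Bad.card
        = ∑ p ∈ (Finset.univ : Finset (Fin k × Bool)),
            (Bad.filter fun x => (I x, Sg x) = p).card :=
          Finset.card_eq_sum_card_fiberwise fun x _ => Finset.mem_univ _
      _ = ∑ i, ∑ s, (Bad.filter fun x => (I x, Sg x) = (i, s)).card := by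
          rw [Fintype.sum_prod_type]
      _ ≤ ∑ i : Fin k, ∑ _s : Bool, (k+1) * ∏ j ∈ Finset.univ.erase i, n j :=
          Finset.sum_le_sum fun i _ => Finset.sum_le_sum fun s _ => hfiber i s
      _ = ∑ i : Fin k, 2 * ((k+1) * ∏ j ∈ Finset.univ.erase i, n j) := by
          refine Finset.sum_congr rfl fun i _ => ?_
          rw [Finset.sum_const, Finset.card_univ]
          simp [two_mul]
      _ = 2 * (k+1) * ∑ i, ∏ j ∈ Finset.univ.erase i, n j := by
          rw [Finset.mul_sum]
          exact Finset.sum_congr rfl fun i _ => by ring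
  -- final arithmetic
  have harith : (Bad.card : ℝ)
      ≤ 2 * k * (k + 1) / ((⨅ i, n i : ℕ) : ℝ) * ∏ i, (n i : ℝ) := by
    have hm0 : (0:ℝ) < ((⨅ i, n i : ℕ) : ℝ) := by
      have : 0 < ⨅ i, n i := hm1
      exact_mod_cast this
    rw [div_mul_eq_mul_div, le_div_iff₀ hm0]
    have hnat : Bad.card * (⨅ i, n i) ≤ 2 * k * (k+1) * ∏ i, n i := by
      calc Bad.card * (⨅ i, n i)
          ≤ (2 * (k+1) * ∑ i, ∏ j ∈ Finset.univ.erase i, n j) * (⨅ i, n i) :=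
            Nat.mul_le_mul_right _ hcard
        _ = 2 * (k+1) * ∑ i, (∏ j ∈ Finset.univ.erase i, n j) * (⨅ i, n i) := by
            rw [mul_assoc, Finset.sum_mul]
        _ ≤ 2 * (k+1) * ∑ i, (∏ j ∈ Finset.univ.erase i, n j) * n i := by
            refine Nat.mul_le_mul_left _ (Finset.sum_le_sum fun i _ => ?_)
            exact Nat.mul_le_mul_left _ (hmle i)
        _ = 2 * (k+1) * ∑ _i : Fin k, ∏ j, n j := by
            congr 1
            refine Finset.sum_congr rfl fun i _ => ?_
            exact Finset.prod_erase_mul _ _ (Finset.mem_univ i)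
        _ = 2 * (k+1) * (k * ∏ j, n j) := by
            rw [Finset.sum_const, Finset.card_univ, Fintype.card_fin, smul_eq_mul]
        _ = 2 * k * (k+1) * ∏ j, n j := by ring
    calc (Bad.card : ℝ) * ((⨅ i, n i : ℕ) : ℝ)
        = ((Bad.card * (⨅ i, n i) : ℕ) : ℝ) := by push_cast; ring
      _ ≤ ((2 * k * (k+1) * ∏ i, n i : ℕ) : ℝ) := Nat.cast_le.2 hnat
      _ = 2 * (k:ℝ) * ((k:ℝ) + 1) * ∏ i, (n i : ℝ) := by push_cast; ring
  exact habs.trans harith
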